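/- Let 𝒜 be the algebra of piecewise constant functions on ℝ with jumps at most at t₁ < ⋯ < t_N, let σ : ℝ → ℝ be a bijection such that 𝒜 is invariant under σ and σ⁻¹, and let σ̃ be the induced automorphism of 𝒜. Then for every n ∈ ℤ, Sepⁿ_𝒜(ℝ) = ⋃_{k ∤ n} C_k, where the union is over all positive integers k that do not divide n. -/

import Mathlib

open scoped Classical

noncomputable section

namespace PaperTRS

/-- The algebra of complex valued functions constant on each set of the family `P`. -/
def partAlg {X J : Type*} (P : J → Set X) : Subalgebra ℂ (X → ℂ) where
  carrier := {h | ∀ i, ∀ x ∈ P i, ∀ y ∈ P i, h x = h y}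
  mul_mem' := by
    intro a b ha hb i x hx y hy
    simp only [Pi.mul_apply, ha i x hx y hy, hb i x hx y hy]
  add_mem' := by
    intro a b ha hb i x hx y hy
    simp only [Pi.add_apply, ha i x hx y hy, hb i x hx y hy]
  algebraMap_mem' := by intro r i x hx y hy; rfl

/-- Piecewise constant functions on `ℝ` whose jumps all lie in the set `T`. -/
def pcAlgOn (T : Set ℝ) : Subalgebra ℂ (ℝ → ℂ) where
  carrier := {h | ∀ x y : ℝ, x ∉ T → y ∉ T →
    (∀ u ∈ T, u ∉ Set.Icc (min x y) (max x y)) → h x = h y}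
  mul_mem' := by
    intro a b ha hb x y hx hy hxy
    simp only [Pi.mul_apply, ha x y hx hy hxy, hb x y hx hy hxy]
  add_mem' := by
    intro a b ha hb x y hx hy hxy
    simp only [Pi.add_apply, ha x y hx hy hxy, hb x y hx hy hxy]
  algebraMap_mem' := by intro r x y _ _ _; rfl

/-- Invariance of an algebra of functions under a self-map of `X`. -/
def AlgInvariant {X : Type*} (A : Subalgebra ℂ (X → ℂ)) (σ : X → X) : Prop :=
  ∀ h ∈ A, (h ∘ σ) ∈ A

/-- `Sep A σ n = {x | ∃ h ∈ A, h x ≠ σ̃ⁿ(h) x}`, where `σ̃ⁿ(h) = h ∘ σ⁻ⁿ`. -/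
def Sep {X : Type*} (A : Subalgebra ℂ (X → ℂ)) (σ : Equiv.Perm X) (n : ℤ) : Set X :=
  {x | ∃ h ∈ A, h x ≠ h ((σ ^ n)⁻¹ x)}

/-- Twisted convolution product on the crossed product `⋊ ℤ`:
`(fₙ δⁿ) * (gₘ δᵐ) = fₙ · σ̃ⁿ(gₘ) · δ^{n+m}` extended bilinearly. -/
def cmul {X : Type*} (σ : Equiv.Perm X) (f g : ℤ →₀ (X → ℂ)) : ℤ →₀ (X → ℂ) :=
  f.sum fun n a => g.sum fun m b =>
    Finsupp.single (n + m) (fun x => a x * b ((σ ^ n)⁻¹ x))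

/-- Membership of an element `Σ fₙ δⁿ` in the crossed product of the algebra `B` with `ℤ`. -/
def InCrossed {X : Type*} (B : Subalgebra ℂ (X → ℂ)) (f : ℤ →₀ (X → ℂ)) : Prop :=
  ∀ n, f n ∈ B

/-- The commutant of `A` inside the crossed product `B ⋊ ℤ` (where `A ⊆ B`). -/
def commutant {X : Type*} (A B : Subalgebra ℂ (X → ℂ)) (σ : Equiv.Perm X) :
    Set (ℤ →₀ (X → ℂ)) :=
  {f | InCrossed B f ∧
    ∀ a ∈ A, cmul σ f (Finsupp.single 0 a) = cmul σ (Finsupp.single 0 a) f}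

/-- The jump points `t₁ < ⋯ < t_N` extended by `t₀ = -∞` and `t_{N+1} = +∞`. -/
def tE (N : ℕ) (t : Fin N → ℝ) (i : ℕ) : EReal :=
  if h : 1 ≤ i ∧ i ≤ N then ((t ⟨i - 1, by omega⟩ : ℝ) : EReal)
  else if i = 0 then ⊥ else ⊤

/-- The open interval `I_i = (t_i, t_{i+1})` for `0 ≤ i ≤ N`. -/
def openPiece (N : ℕ) (t : Fin N → ℝ) (i : ℕ) : Set ℝ :=
  {x : ℝ | tE N t i < (x : EReal) ∧ (x : EReal) < tE N t (i + 1)}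

/-- The sets of the partition of `ℝ` determined by the jump points: the open
intervals `I_0, …, I_N` together with the singletons `{t_i}`. -/
def pieces (N : ℕ) (t : Fin N → ℝ) : Set (Set ℝ) :=
  {P | (∃ i : ℕ, i ≤ N ∧ P = openPiece N t i) ∨ (∃ i : Fin N, P = {t i})}

/-- `C_k`: points `x` such that `k` is the smallest positive integer with `x` and
`σᵏ(x)` in one common set of the partition. -/
def Ck (N : ℕ) (t : Fin N → ℝ) (σ : Equiv.Perm ℝ) (k : ℕ) : Set ℝ :=
  {x | IsLeast {j : ℕ | 0 < j ∧ ∃ P ∈ pieces N t, x ∈ P ∧ (σ ^ j) x ∈ P} k}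

end PaperTRS
namespace PaperTRS

/-- With `p` points `s i 0 < ⋯ < s i (p-1)` added in the interval `I_{α i}`, the `j`-th
open subinterval of the refined partition of `I_{α i}`, for `j = 0, …, p`. -/
def subPiece (N : ℕ) (t : Fin N → ℝ) {k p : ℕ} (α : Fin k → ℕ)
    (s : Fin k → Fin p → ℝ) (i : Fin k) (j : Fin (p + 1)) : Set ℝ :=
  {x : ℝ |
    (if hj : (j : ℕ) = 0 then tE N t (α i)
      else ((s i ⟨(j : ℕ) - 1, by have := j.isLt; omega⟩ : ℝ) : EReal)) < (x : EReal) ∧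
    (x : EReal) <
      (if hj : (j : ℕ) = p then tE N t (α i + 1)
        else ((s i ⟨(j : ℕ), by have := j.isLt; omega⟩ : ℝ) : EReal))}

/-- The sets of the refined partition of the union of the intervals `I_{α i}`: the open
subintervals determined by the added jump points together with the singleton jump points. -/
def cyclePieces (N : ℕ) (t : Fin N → ℝ) {k p : ℕ} (α : Fin k → ℕ)
    (s : Fin k → Fin p → ℝ) : Set (Set ℝ) :=
  {P | (∃ i j, P = subPiece N t α s i j) ∨ (∃ i j, P = ({s i j} : Set ℝ))}

/-- `C̃_r`: points `x` of `⋃ᵢ I_{α i}` such that `r` is the smallest positive integer with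
`x` and `σʳ(x)` in one common set of the refined partition. -/
def Ctil (N : ℕ) (t : Fin N → ℝ) (σ : Equiv.Perm ℝ) {k p : ℕ} (α : Fin k → ℕ)
    (s : Fin k → Fin p → ℝ) (r : ℕ) : Set ℝ :=
  {x | x ∈ ⋃ i, openPiece N t (α i) ∧
    IsLeast {j : ℕ | 0 < j ∧ ∃ P ∈ cyclePieces N t α s, x ∈ P ∧ (σ ^ j) x ∈ P} r}

/-- The cyclic setup: `k` pairwise distinct open intervals `I_{α 0}, …, I_{α (k-1)}` of the
original partition, contained in `C_k` and permuted cyclically by `σ`, with `p` jump points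
`s i 0 < ⋯ < s i (p-1)` added into each of them, and both the original algebra `𝒜` and the
refined algebra `𝒜_S` invariant under `σ` and `σ⁻¹`. -/
def CyclicSetup (N : ℕ) (t : Fin N → ℝ) (σ : Equiv.Perm ℝ) {k p : ℕ} (α : Fin k → ℕ)
    (s : Fin k → Fin p → ℝ) : Prop :=
  0 < k ∧ (∀ i, α i ≤ N) ∧ Function.Injective α ∧
  (∀ i j, s i j ∈ openPiece N t (α i)) ∧ (∀ i, StrictMono (s i)) ∧
  (∀ i : Fin k, ∃ i' : Fin k, ((i' : ℕ) = ((i : ℕ) + 1) % k) ∧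
    σ '' openPiece N t (α i) = openPiece N t (α i')) ∧
  (∀ i, openPiece N t (α i) ⊆ Ck N t σ k) ∧
  AlgInvariant (pcAlgOn (Set.range t)) σ ∧
  AlgInvariant (pcAlgOn (Set.range t)) σ.symm ∧
  AlgInvariant (pcAlgOn (Set.range t ∪ ⋃ i, Set.range (s i))) σ ∧
  AlgInvariant (pcAlgOn (Set.range t ∪ ⋃ i, Set.range (s i))) σ.symm

/-- `C_k` for the partition `P` of a general set `X`. -/
def CkGen {X ι : Type*} (P : ι → Set X) (σ : Equiv.Perm X) (k : ℕ) : Set X :=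
  {x | IsLeast {j : ℕ | 0 < j ∧ ∃ i, x ∈ P i ∧ (σ ^ j) x ∈ P i} k}

/-- `C̃_r` relative to a family `Q` of refined pieces inside the subset `base` of `X`. -/
def CtilGen {X ι : Type*} (σ : Equiv.Perm X) (Q : ι → Set X) (base : Set X) (r : ℕ) :
    Set X :=
  {x | x ∈ base ∧ IsLeast {j : ℕ | 0 < j ∧ ∃ i, x ∈ Q i ∧ (σ ^ j) x ∈ Q i} r}

/-- `C_∞`: points that never return to the partition set they lie in. -/
def Cinf {X ι : Type*} (P : ι → Set X) (σ : Equiv.Perm X) : Set X :=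
  {x | ∀ k : ℕ, 0 < k → ¬∃ i, x ∈ P i ∧ (σ ^ k) x ∈ P i}

end PaperTRS
namespace PaperTRS

section Statement2Aux

variable {N : ℕ} {t : Fin N → ℝ}

/-- `x` and `y` lie in one common set of the partition. -/
def sameP (N : ℕ) (t : Fin N → ℝ) (x y : ℝ) : Prop :=
  ∃ P ∈ pieces N t, x ∈ P ∧ y ∈ P

lemma tE_coe {i : ℕ} (h1 : 1 ≤ i) (h2 : i ≤ N) :
    tE N t i = ((t ⟨i - 1, by omega⟩ : ℝ) : EReal) := by
  rw [tE, dif_pos ⟨h1, h2⟩]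

lemma tE_zero : tE N t 0 = ⊥ := by simp [tE]

lemma tE_topAux : tE N t (N + 1) = ⊤ := by
  rw [tE, dif_neg (by omega), if_neg (by omega)]

lemma tE_mono (ht : StrictMono t) {i j : ℕ} (hij : i ≤ j) (hj : j ≤ N + 1) :
    tE N t i ≤ tE N t j := by
  rcases Nat.eq_zero_or_pos i with hi0 | hi0
  · subst hi0; rw [tE_zero]; exact bot_le
  rcases eq_or_lt_of_le hj with hjN | hjN
  · rw [hjN, tE_topAux]; exact le_top
  · have hjN' : j ≤ N := by omega
    rw [tE_coe hi0 (by omega), tE_coe (by omega) hjN']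
    exact_mod_cast ht.monotone (by simp [Fin.mk_le_mk]; omega)

lemma t_not_mem_openPiece (ht : StrictMono t) {i : ℕ} (hi : i ≤ N) (j : Fin N) :
    t j ∉ openPiece N t i := by
  rintro ⟨h1, h2⟩
  have hN : 0 < N := j.pos
  rcases Nat.eq_zero_or_pos i with hi0 | hi0
  · subst hi0
    rw [tE_coe (by omega) (by omega)] at h2
    have : (j : ℕ) < 0 := by
      have := ht.lt_iff_lt.mp (EReal.coe_lt_coe_iff.mp h2)
      simpa [Fin.lt_def] using this
    omega
  · rw [tE_coe hi0 hi] at h1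
    have hji : i - 1 < (j : ℕ) := by
      have := ht.lt_iff_lt.mp (EReal.coe_lt_coe_iff.mp h1)
      simpa [Fin.lt_def] using this
    rcases eq_or_lt_of_le hi with hiN | hiN
    · have := j.isLt; omega
    · rw [tE_coe (by omega) (by omega)] at h2
      have : (j : ℕ) < i := by
        have := ht.lt_iff_lt.mp (EReal.coe_lt_coe_iff.mp h2)
        simpa [Fin.lt_def] using this
      omega

lemma openPiece_lt_aux (ht : StrictMono t) {i j : ℕ} (hj : j ≤ N) (hij : i < j) {y : ℝ}
    (hyi : y ∈ openPiece N t i) (hyj : y ∈ openPiece N t j) : False := by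
  exact absurd (lt_trans (lt_of_lt_of_le hyi.2 (tE_mono ht (by omega) (by omega))) hyj.1)
    (lt_irrefl _)

lemma openPiece_disjoint (ht : StrictMono t) {i j : ℕ} (hi : i ≤ N) (hj : j ≤ N) {y : ℝ}
    (hyi : y ∈ openPiece N t i) (hyj : y ∈ openPiece N t j) : i = j := by
  rcases lt_trichotomy i j with h | h | h
  · exact absurd (openPiece_lt_aux ht hj h hyi hyj) not_false
  · exact h
  · exact absurd (openPiece_lt_aux ht hi h hyj hyi) not_false

lemma piece_eq (ht : StrictMono t) {P Q : Set ℝ} (hP : P ∈ pieces N t)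
    (hQ : Q ∈ pieces N t) {y : ℝ} (hyP : y ∈ P) (hyQ : y ∈ Q) : P = Q := by
  rcases hP with ⟨i, hi, rfl⟩ | ⟨i, rfl⟩ <;> rcases hQ with ⟨j, hj, rfl⟩ | ⟨j, rfl⟩
  · rw [openPiece_disjoint ht hi hj hyP hyQ]
  · exact absurd (hyQ ▸ hyP) (t_not_mem_openPiece ht hi j)
  · exact absurd (hyP ▸ hyQ) (t_not_mem_openPiece ht hj i)
  · have h1 : y = t i := hyP
    have h2 : y = t j := hyQ
    rw [show i = j from ht.injective (h1.symm.trans h2)]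

lemma sameP_symm {x y : ℝ} (h : sameP N t x y) : sameP N t y x := by
  obtain ⟨P, hP, hx, hy⟩ := h; exact ⟨P, hP, hy, hx⟩

lemma sameP_trans (ht : StrictMono t) {x y z : ℝ} (h1 : sameP N t x y)
    (h2 : sameP N t y z) : sameP N t x z := by
  obtain ⟨P, hP, hx, hy⟩ := h1
  obtain ⟨Q, hQ, hy', hz⟩ := h2
  exact ⟨P, hP, hx, (piece_eq ht hQ hP hy' hy) ▸ hz⟩

lemma exists_piece (ht : StrictMono t) (x : ℝ) : ∃ P ∈ pieces N t, x ∈ P := by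
  by_cases hx : x ∈ Set.range t
  · obtain ⟨i, rfl⟩ := hx
    exact ⟨{t i}, Or.inr ⟨i, rfl⟩, rfl⟩
  · set i := (Finset.univ.filter fun j : Fin N => t j < x).card with hidef
    have hiN : i ≤ N := by
      have := Finset.card_filter_le (Finset.univ : Finset (Fin N))
        (fun j : Fin N => t j < x)
      simpa using this
    have key : ∀ j : Fin N, t j < x ↔ (j : ℕ) < i := by
      intro j
      constructor
      · intro hj
        have hsub : Finset.Iic j ⊆ Finset.univ.filter fun j' : Fin N => t j' < x := by
          intro j' hj'
          simp only [Finset.mem_Iic] at hj'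
          simp only [Finset.mem_filter, Finset.mem_univ, true_and]
          exact lt_of_le_of_lt (ht.monotone hj') hj
        have := Finset.card_le_card hsub
        rwa [Fin.card_Iic] at this
      · intro hj
        by_contra hc
        push_neg at hc
        have hsub : (Finset.univ.filter fun j' : Fin N => t j' < x) ⊆ Finset.Iio j := by
          intro j' hj'
          simp only [Finset.mem_filter, Finset.mem_univ, true_and] at hj'
          simp only [Finset.mem_Iio]
          by_contra hcc
          push_neg at hcc
          exact absurd (lt_of_le_of_lt (hc.trans (ht.monotone hcc)) hj') (lt_irrefl _)
        have := Finset.card_le_card hsub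
        rw [Fin.card_Iio] at this
        omega
    refine ⟨openPiece N t i, Or.inl ⟨i, hiN, rfl⟩, ?_, ?_⟩
    · rcases Nat.eq_zero_or_pos i with h0 | h0
      · rw [h0, tE_zero]; exact EReal.bot_lt_coe x
      · rw [tE_coe h0 hiN]
        exact_mod_cast (key ⟨i - 1, by omega⟩).mpr (by simp; omega)
    · rcases eq_or_lt_of_le hiN with hN | hN
      · rw [hN, tE_topAux]; exact EReal.coe_lt_top x
      · rw [tE_coe (by omega) (by omega)]
        have h1 : ¬ t ⟨i, by omega⟩ < x := by
          intro h
          have := (key ⟨i, by omega⟩).mp h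
          simp at this
        have h2 : x ≠ t ⟨i, by omega⟩ := fun h => hx ⟨_, h.symm⟩
        exact_mod_cast lt_of_le_of_ne (not_lt.mp h1) h2

lemma mem_openPiece_of_between {i : ℕ} {a b u : ℝ} (ha : a ∈ openPiece N t i)
    (hb : b ∈ openPiece N t i) (h1 : a ≤ u) (h2 : u ≤ b) : u ∈ openPiece N t i :=
  ⟨lt_of_lt_of_le ha.1 (by exact_mod_cast h1), lt_of_le_of_lt (by exact_mod_cast h2) hb.2⟩

lemma apply_eq_of_sameP (ht : StrictMono t) {h : ℝ → ℂ}
    (hh : h ∈ pcAlgOn (Set.range t)) {x y : ℝ} (hxy : sameP N t x y) : h x = h y := by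
  obtain ⟨P, hP, hx, hy⟩ := hxy
  rcases hP with ⟨i, hi, rfl⟩ | ⟨i, rfl⟩
  · refine hh x y ?_ ?_ ?_
    · rintro ⟨j, rfl⟩; exact t_not_mem_openPiece ht hi j hx
    · rintro ⟨j, rfl⟩; exact t_not_mem_openPiece ht hi j hy
    · rintro u ⟨j, rfl⟩ ⟨hu1, hu2⟩
      have hmin : min x y ∈ openPiece N t i := by
        rcases min_cases x y with ⟨h', _⟩ | ⟨h', _⟩ <;> rw [h'] <;> assumption
      have hmax : max x y ∈ openPiece N t i := by
        rcases max_cases x y with ⟨h', _⟩ | ⟨h', _⟩ <;> rw [h'] <;> assumption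
      exact t_not_mem_openPiece ht hi j (mem_openPiece_of_between hmin hmax hu1 hu2)
  · rw [show x = t i from hx, show y = t i from hy]

lemma mem_openPiece_of_no_jump (ht : StrictMono t) {i : ℕ} (hi : i ≤ N) {x y : ℝ}
    (hy : y ∉ Set.range t)
    (hxy : ∀ u ∈ Set.range t, u ∉ Set.Icc (min x y) (max x y))
    (hx : x ∈ openPiece N t i) : y ∈ openPiece N t i := by
  constructor
  · by_contra hlt
    push_neg at hlt
    rcases Nat.eq_zero_or_pos i with h0 | h0
    · rw [h0, tE_zero] at hlt
      exact absurd hlt (by simp)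
    · rw [tE_coe h0 hi] at hlt
      have hyu : y ≤ t ⟨i - 1, by omega⟩ := by exact_mod_cast hlt
      have hx1 := hx.1
      rw [tE_coe h0 hi] at hx1
      have hux : t ⟨i - 1, by omega⟩ < x := by exact_mod_cast hx1
      exact hxy _ ⟨_, rfl⟩ ⟨le_trans (min_le_right x y) hyu, le_trans hux.le (le_max_left x y)⟩
  · by_contra hlt
    push_neg at hlt
    rcases eq_or_lt_of_le hi with hN | hN
    · rw [hN, tE_topAux] at hlt
      exact absurd (top_le_iff.mp hlt) (by simp)
    · rw [tE_coe (by omega) (by omega)] at hlt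
      have hyu : t ⟨i, by omega⟩ ≤ y := by exact_mod_cast hlt
      have hux : x < t ⟨i, by omega⟩ := by
        have := hx.2
        rw [tE_coe (by omega) (by omega)] at this
        exact_mod_cast this
      exact hxy _ ⟨_, rfl⟩ ⟨le_trans (min_le_left x y) hux.le, le_trans hyu (le_max_right x y)⟩

lemma indicator_openPiece_mem (ht : StrictMono t) {i : ℕ} (hi : i ≤ N) :
    (fun z => if z ∈ openPiece N t i then (1 : ℂ) else 0) ∈ pcAlgOn (Set.range t) := by
  intro x y hx hy hxy
  have hxy' : ∀ u ∈ Set.range t, u ∉ Set.Icc (min y x) (max y x) := by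
    simpa [min_comm, max_comm] using hxy
  have hiff : x ∈ openPiece N t i ↔ y ∈ openPiece N t i :=
    ⟨mem_openPiece_of_no_jump ht hi hy hxy,
     mem_openPiece_of_no_jump ht hi hx hxy'⟩
  simp only [hiff]

lemma indicator_singleton_mem (i : Fin N) :
    (fun z => if z = t i then (1 : ℂ) else 0) ∈ pcAlgOn (Set.range t) := by
  intro x y hx hy _
  show (if x = t i then (1 : ℂ) else 0) = (if y = t i then (1 : ℂ) else 0)
  rw [if_neg (fun h => hx ⟨i, h.symm⟩), if_neg (fun h => hy ⟨i, h.symm⟩)]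

lemma exists_sep (ht : StrictMono t) {x y : ℝ} (hxy : ¬ sameP N t x y) :
    ∃ h ∈ pcAlgOn (Set.range t), h x ≠ h y := by
  obtain ⟨P, hP, hx⟩ := exists_piece ht x
  have hy : y ∉ P := fun hy => hxy ⟨P, hP, hx, hy⟩
  rcases hP with ⟨i, hi, rfl⟩ | ⟨i, rfl⟩
  · exact ⟨_, indicator_openPiece_mem ht hi, by simp [hx, hy]⟩
  · refine ⟨_, indicator_singleton_mem i, ?_⟩
    simp only [Set.mem_singleton_iff] at hx hy
    simp [hx, hy]

lemma sameP_refl (ht : StrictMono t) (x : ℝ) : sameP N t x x := by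
  obtain ⟨P, hP, hx⟩ := exists_piece ht x
  exact ⟨P, hP, hx, hx⟩

variable {σ : Equiv.Perm ℝ}

lemma sameP_apply (ht : StrictMono t) (hinv : AlgInvariant (pcAlgOn (Set.range t)) σ)
    {x y : ℝ} (hxy : sameP N t x y) : sameP N t (σ x) (σ y) := by
  by_contra hc
  obtain ⟨h, hh, hne⟩ := exists_sep ht hc
  exact hne (apply_eq_of_sameP ht (hinv h hh) hxy)

lemma sameP_apply_symm (ht : StrictMono t)
    (hinv' : AlgInvariant (pcAlgOn (Set.range t)) σ.symm)
    {x y : ℝ} (hxy : sameP N t x y) : sameP N t (σ.symm x) (σ.symm y) := by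
  by_contra hc
  obtain ⟨h, hh, hne⟩ := exists_sep ht hc
  exact hne (apply_eq_of_sameP ht (hinv' h hh) hxy)

lemma sameP_pow (ht : StrictMono t) (hinv : AlgInvariant (pcAlgOn (Set.range t)) σ)
    (n : ℕ) : ∀ x y : ℝ, sameP N t x y → sameP N t ((σ ^ n) x) ((σ ^ n) y) := by
  induction n with
  | zero => intro x y h; simpa using h
  | succ n ih =>
      intro x y h
      have h1 := ih (σ x) (σ y) (sameP_apply ht hinv h)
      have e : ∀ z : ℝ, (σ ^ (n + 1)) z = (σ ^ n) (σ z) := by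
        intro z
        rw [pow_succ, Equiv.Perm.mul_apply]
      rw [e x, e y]
      exact h1

lemma sameP_zpow (ht : StrictMono t) (hinv : AlgInvariant (pcAlgOn (Set.range t)) σ)
    (hinv' : AlgInvariant (pcAlgOn (Set.range t)) σ.symm)
    (m : ℤ) {x y : ℝ} (hxy : sameP N t x y) : sameP N t ((σ ^ m) x) ((σ ^ m) y) := by
  rcases m with n | n
  · rw [Int.ofNat_eq_coe, zpow_natCast]
    exact sameP_pow ht hinv n x y hxy
  · have e : ∀ z : ℝ, (σ ^ (Int.negSucc n)) z = ((σ.symm) ^ (n + 1)) z := by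
      intro z
      rw [zpow_negSucc, ← inv_pow]
      rfl
    rw [e x, e y]
    have hpow : ∀ x y : ℝ, sameP N t x y →
        sameP N t ((σ.symm ^ (n + 1)) x) ((σ.symm ^ (n + 1)) y) := by
      intro x y h
      induction (n + 1) generalizing x y with
      | zero => simpa using h
      | succ m ih =>
          have h1 := ih (σ.symm x) (σ.symm y) (sameP_apply_symm ht hinv' h)
          have e2 : ∀ z : ℝ, (σ.symm ^ (m + 1)) z = (σ.symm ^ m) (σ.symm z) := by
            intro z; rw [pow_succ, Equiv.Perm.mul_apply]
          rw [e2 x, e2 y]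
          exact h1
    exact hpow x y hxy

lemma pieces_finite : (pieces N t).Finite := by
  have hsub : pieces N t ⊆ (fun i => openPiece N t i) '' Set.Iic N ∪
      (fun i : Fin N => ({t i} : Set ℝ)) '' Set.univ := by
    rintro P (⟨i, hi, rfl⟩ | ⟨i, rfl⟩)
    · exact Or.inl ⟨i, hi, rfl⟩
    · exact Or.inr ⟨i, trivial, rfl⟩
  exact (((Set.finite_Iic N).image _).union (Set.finite_univ.image _)).subset hsub

lemma exists_pos_return (ht : StrictMono t)
    (hinv : AlgInvariant (pcAlgOn (Set.range t)) σ)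
    (hinv' : AlgInvariant (pcAlgOn (Set.range t)) σ.symm) (x : ℝ) :
    ∃ k : ℕ, 0 < k ∧ sameP N t x ((σ ^ (k : ℤ)) x) := by
  have hfin : Finite ↥(pieces N t) := pieces_finite.to_subtype
  choose P hP hxP using fun j : ℕ => exists_piece ht ((σ ^ (j : ℤ)) x)
  obtain ⟨a, b, hab, hfab⟩ :=
    Finite.exists_ne_map_eq_of_infinite (fun j : ℕ => (⟨P j, hP j⟩ : ↥(pieces N t)))
  have key : ∀ a b : ℕ, a < b → P a = P b → ∃ k : ℕ, 0 < k ∧ sameP N t x ((σ ^ (k : ℤ)) x) := by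
    intro a b hlt hPeq
    have hs : sameP N t ((σ ^ (a : ℤ)) x) ((σ ^ (b : ℤ)) x) :=
      ⟨P a, hP a, hxP a, hPeq ▸ hxP b⟩
    have hs2 := sameP_zpow ht hinv hinv' (-(a : ℤ)) hs
    have e1 : (σ ^ (-(a : ℤ))) ((σ ^ (a : ℤ)) x) = x := by
      rw [← Equiv.Perm.mul_apply, ← zpow_add]
      simp
    have e2 : (σ ^ (-(a : ℤ))) ((σ ^ (b : ℤ)) x) = (σ ^ ((b - a : ℕ) : ℤ)) x := by
      have he : -(a : ℤ) + (b : ℤ) = ((b - a : ℕ) : ℤ) := by omega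
      rw [← Equiv.Perm.mul_apply, ← zpow_add, he]
    rw [e1, e2] at hs2
    exact ⟨b - a, by omega, hs2⟩
  have hPab : P a = P b := congrArg Subtype.val hfab
  rcases hab.lt_or_gt with h | h
  · exact key a b h hPab
  · exact key b a h hPab.symm

end Statement2Aux

/-- for every `n ∈ ℤ`, `Sepⁿ_𝒜(ℝ) = ⋃_{k ∤ n} C_k`, the union being over the
positive integers `k` not dividing `n`. -/
theorem statement2 (N : ℕ) (t : Fin N → ℝ) (ht : StrictMono t) (σ : Equiv.Perm ℝ)
    (hinv : AlgInvariant (pcAlgOn (Set.range t)) σ)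
    (hinv' : AlgInvariant (pcAlgOn (Set.range t)) σ.symm) :
    ∀ n : ℤ, Sep (pcAlgOn (Set.range t)) σ n =
      ⋃ (k : ℕ) (_ : 0 < k ∧ ¬((k : ℤ) ∣ n)), Ck N t σ k := by
  intro n
  ext x
  -- the return set `G` is closed under the group operations of `ℤ`
  set G : Set ℤ := {m | sameP N t x ((σ ^ m) x)} with hGdef
  have hG0 : (0 : ℤ) ∈ G := by
    simpa [hGdef] using sameP_refl ht x
  have hGneg : ∀ m ∈ G, -m ∈ G := by
    intro m hm
    have h2 := sameP_zpow ht hinv hinv' (-m) hm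
    have e1 : (σ ^ (-m)) ((σ ^ m) x) = x := by
      rw [← Equiv.Perm.mul_apply, ← zpow_add]
      simp
    rw [e1] at h2
    exact sameP_symm h2
  have hGadd : ∀ a ∈ G, ∀ b ∈ G, a + b ∈ G := by
    intro a ha b hb
    have h2 := sameP_zpow ht hinv hinv' b ha
    have e1 : (σ ^ b) ((σ ^ a) x) = (σ ^ (a + b)) x := by
      rw [← Equiv.Perm.mul_apply, ← zpow_add, add_comm]
    rw [e1] at h2
    exact sameP_trans ht hb h2
  obtain ⟨k0, hk0pos, hk0G⟩ := exists_pos_return ht hinv hinv' x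
  have Hex : ∃ k : ℕ, 0 < k ∧ (k : ℤ) ∈ G := ⟨k0, hk0pos, hk0G⟩
  set k := Nat.find Hex with hkdef
  obtain ⟨hkpos, hkG⟩ := Nat.find_spec Hex
  have hmin : ∀ j : ℕ, 0 < j → (j : ℤ) ∈ G → k ≤ j := fun j h1 h2 => Nat.find_le ⟨h1, h2⟩
  have hmul : ∀ q : ℤ, q * (k : ℤ) ∈ G := by
    intro q
    induction q using Int.induction_on with
    | zero => simpa using hG0
    | succ i ih =>
        have h := hGadd _ ih _ hkG
        have e : (i + 1) * (k : ℤ) = i * k + k := by ring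
        rwa [e]
    | pred i ih =>
        have h := hGadd _ ih _ (hGneg _ hkG)
        have e : (-i - 1) * (k : ℤ) = -i * k + -k := by ring
        rwa [e]
  have hdvd : ∀ m : ℤ, m ∈ G ↔ (k : ℤ) ∣ m := by
    intro m
    constructor
    · intro hm
      have hr : m % (k : ℤ) ∈ G := by
        have e : m % (k : ℤ) = m + (-(m / k)) * k := by
          rw [Int.emod_def]; ring
        rw [e]
        exact hGadd _ hm _ (hmul _)
      have h0 : 0 ≤ m % (k : ℤ) := Int.emod_nonneg m (by exact_mod_cast hkpos.ne')
      have h1 : m % (k : ℤ) < k := Int.emod_lt_of_pos m (by exact_mod_cast hkpos)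
      by_contra hnd
      have hne : m % (k : ℤ) ≠ 0 := fun h => hnd (Int.dvd_of_emod_eq_zero h)
      set r := (m % (k : ℤ)).toNat with hrdef
      have hrc : (r : ℤ) = m % (k : ℤ) := Int.toNat_of_nonneg h0
      have hle : k ≤ r := hmin r (by omega) (by rwa [hrc])
      omega
    · rintro ⟨q, rfl⟩
      have := hmul q
      rwa [mul_comm]
  -- `x ∈ C_k`
  have hCk : x ∈ Ck N t σ k := by
    constructor
    · refine ⟨hkpos, ?_⟩
      have h' : sameP N t x ((σ ^ ((k : ℕ) : ℤ)) x) := hkG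
      rw [zpow_natCast] at h'
      exact h'
    · rintro j ⟨hj0, P, hP, h1, h2⟩
      refine hmin j hj0 ?_
      show sameP N t x ((σ ^ ((j : ℕ) : ℤ)) x)
      rw [zpow_natCast]
      exact ⟨P, hP, h1, h2⟩
  -- membership in `Sep`
  have hpt : (σ ^ n)⁻¹ = σ ^ (-n) := (zpow_neg σ n).symm
  have hSep : x ∈ Sep (pcAlgOn (Set.range t)) σ n ↔ ¬ ((k : ℤ) ∣ n) := by
    constructor
    · rintro ⟨h, hh, hne⟩ hdvd'
      have hmem : (-n) ∈ G := (hdvd (-n)).2 (dvd_neg.mpr hdvd')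
      have hsm : sameP N t x ((σ ^ n)⁻¹ x) := by rw [hpt]; exact hmem
      exact hne (apply_eq_of_sameP ht hh hsm)
    · intro hnd
      have hns : ¬ sameP N t x ((σ ^ (-n)) x) := by
        intro hs
        exact hnd (dvd_neg.mp ((hdvd (-n)).1 hs))
      have hns' : ¬ sameP N t x ((σ ^ n)⁻¹ x) := by rwa [hpt]
      obtain ⟨h, hh, hne⟩ := exists_sep ht hns'
      exact ⟨h, hh, hne⟩
  constructor
  · intro hx
    simp only [Set.mem_iUnion]
    exact ⟨k, ⟨hkpos, hSep.1 hx⟩, hCk⟩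
  · intro hx
    simp only [Set.mem_iUnion] at hx
    obtain ⟨j, ⟨hj0, hjnd⟩, hxj⟩ := hx
    have hjk : j = k := (hxj : IsLeast _ j).unique hCk
    exact hSep.2 (by rwa [hjk] at hjnd)

end PaperTRS
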